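/- If n₁, …, nₘ are distinct squarefree positive integers, then √n₁, …, √nₘ are linearly independent over ℚ. -/

import Mathlib

set_option maxHeartbeats 800000
set_option synthInstance.maxHeartbeats 200000

open Polynomial IntermediateField

/-- Product of two distinct squarefree positive naturals is not a square. -/
lemma sqf_mul_not_square {a b : ℕ} (ha : Squarefree a) (hb : Squarefree b)
    (hne : a ≠ b) : ¬ IsSquare (a * b) := by
  rintro ⟨s, hs⟩
  have ha0 : a ≠ 0 := ha.ne_zero
  have hb0 : b ≠ 0 := hb.ne_zero
  have hs0 : s ≠ 0 := by
    rintro rfl; simp at hs; tauto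
  apply hne
  have hfa : ∀ p, a.factorization p ≤ 1 := fun p => Squarefree.natFactorization_le_one p ha
  have hfb : ∀ p, b.factorization p ≤ 1 := fun p => Squarefree.natFactorization_le_one p hb
  apply Nat.factorization_inj (by simpa using ha0) (by simpa using hb0)
  ext p
  have h1 : a.factorization p + b.factorization p = 2 * s.factorization p := by
    have := congrArg (fun k => Nat.factorization k p) hs
    simpa [Nat.factorization_mul ha0 hb0, Nat.factorization_mul hs0 hs0, two_mul] using this
  have := hfa p; have := hfb p
  omega

/-- The trace of a square root of a non-square natural number is zero. -/
lemma trace_sqrt_eq_zero (K : IntermediateField ℚ ℝ) [FiniteDimensional ℚ K]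
    (N : ℕ) (hN : ¬ IsSquare N) (x : K) (hx : (x : ℝ) = Real.sqrt N) :
    Algebra.trace ℚ K x = 0 := by
  have hirr : Irrational (Real.sqrt N) := irrational_sqrt_natCast_iff.2 hN
  have hx2 : x ^ 2 = (N : K) := by
    ext
    push_cast [hx]
    exact Real.sq_sqrt (N.cast_nonneg)
  set p : ℚ[X] := X ^ 2 - C (N : ℚ) with hp
  have hmonic : p.Monic := monic_X_pow_sub_C _ two_ne_zero
  have haev : Polynomial.aeval x p = 0 := by
    simp [hp, hx2]
  have hint : IsIntegral ℚ x := ⟨p, hmonic, haev⟩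
  have hdvd := minpoly.dvd ℚ x haev
  have hpdeg : p.natDegree = 2 := natDegree_X_pow_sub_C
  have hnotmem : x ∉ (algebraMap ℚ K).range := by
    rintro ⟨q, hq⟩
    apply hirr
    refine ⟨q, ?_⟩
    rw [← hx, ← hq]
    rfl
  have h2le : 2 ≤ (minpoly ℚ x).natDegree := (minpoly.two_le_natDegree_iff hint).2 hnotmem
  have hminp : minpoly ℚ x = p := by
    exact (eq_of_monic_of_dvd_of_natDegree_le (minpoly.monic hint) hmonic hdvd
      (by rw [hpdeg]; exact h2le)).symm
  -- now use the tower ℚ ⊆ ℚ⟮x⟯ ⊆ K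
  set F : IntermediateField ℚ K := IntermediateField.adjoin ℚ {x} with hF
  haveI hFD : FiniteDimensional (↥F) K := FiniteDimensional.right ℚ _ K
  have hgen : algebraMap (↥F) K (AdjoinSimple.gen ℚ x) = x :=
    IntermediateField.AdjoinSimple.algebraMap_gen ℚ x
  have htr : Algebra.trace ℚ (↥F) (AdjoinSimple.gen ℚ x) = 0 := by
    have key := (IntermediateField.adjoin.powerBasis hint).trace_gen_eq_nextCoeff_minpoly
    rw [IntermediateField.adjoin.powerBasis_gen] at key
    rw [show Algebra.trace ℚ (↥F) (AdjoinSimple.gen ℚ x) = _ from key, IntermediateField.minpoly_gen, hminp]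
    have hnc : p.nextCoeff = 0 := by
      rw [Polynomial.nextCoeff_of_natDegree_pos (by rw [hpdeg]; norm_num), hpdeg]
      simp [hp, Polynomial.coeff_X_pow]
    rw [hnc, neg_zero]
  rw [← Algebra.trace_trace (S := ↥F) x, ← hgen, Algebra.trace_algebraMap, map_nsmul, htr,
    smul_zero]

theorem stmt_15 (m : ℕ) (n : Fin m → ℕ) (hinj : Function.Injective n)
    (hsf : ∀ i, Squarefree (n i)) (hpos : ∀ i, 0 < n i) :
    LinearIndependent ℚ (fun i : Fin m => Real.sqrt (n i)) := by
  set K : IntermediateField ℚ ℝ :=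
    IntermediateField.adjoin ℚ (Set.range fun i : Fin m => Real.sqrt (n i)) with hK
  have hintegral : ∀ y ∈ (Set.range fun i : Fin m => Real.sqrt (n i)), IsIntegral ℚ y := by
    rintro y ⟨i, rfl⟩
    refine ⟨X ^ 2 - C ((n i : ℚ)), monic_X_pow_sub_C _ two_ne_zero, ?_⟩
    have h2 : Real.sqrt (n i) ^ 2 = (n i : ℝ) := Real.sq_sqrt (Nat.cast_nonneg _)
    simp [h2]
  have : Finite (Set.range fun i : Fin m => Real.sqrt (n i)) := Set.finite_range _
  have hFD : FiniteDimensional ℚ K := IntermediateField.finiteDimensional_adjoin hintegral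
  have hmem : ∀ i, Real.sqrt (n i) ∈ K := fun i =>
    IntermediateField.subset_adjoin ℚ _ ⟨i, rfl⟩
  set x : Fin m → K := fun i => ⟨Real.sqrt (n i), hmem i⟩ with hxdef
  rw [Fintype.linearIndependent_iff]
  intro g hg j
  -- lift the relation to K
  have hgK : ∑ i, g i • x i = 0 := by
    ext
    push_cast
    simpa using hg
  -- multiply by x j and take trace
  have hrel : ∑ i, g i • (x i * x j) = 0 := by
    calc ∑ i, g i • (x i * x j) = (∑ i, g i • x i) * x j := by
          rw [Finset.sum_mul]
          exact Finset.sum_congr rfl fun i _ => (smul_mul_assoc (g i) (x i) (x j)).symm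
      _ = 0 := by rw [hgK, zero_mul]
  have htr : ∑ i, g i • Algebra.trace ℚ K (x i * x j) = 0 := by
    have := congrArg (Algebra.trace ℚ K) hrel
    simpa [map_sum] using this
  have htr_off : ∀ i, i ≠ j → Algebra.trace ℚ K (x i * x j) = 0 := by
    intro i hij
    apply trace_sqrt_eq_zero K (n i * n j)
    · exact sqf_mul_not_square (hsf i) (hsf j) (fun h => hij (hinj h))
    · show Real.sqrt (n i) * Real.sqrt (n j) = _
      push_cast
      exact (Real.sqrt_mul (Nat.cast_nonneg _) _).symm
  have htr_diag : Algebra.trace ℚ K (x j * x j) = (Module.finrank ℚ K : ℚ) * (n j) := by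
    have hxx : x j * x j = algebraMap ℚ K (n j) := by
      ext
      push_cast
      exact Real.mul_self_sqrt (Nat.cast_nonneg _)
    rw [hxx, Algebra.trace_algebraMap]
    simp [nsmul_eq_mul, mul_comm]
  rw [Finset.sum_eq_single j] at htr
  · rw [htr_diag, smul_eq_mul] at htr
    have h1 : (0:ℚ) < (Module.finrank ℚ K : ℚ) := by
      have := Module.finrank_pos (R := ℚ) (M := K)
      exact_mod_cast this
    have h2 : (0:ℚ) < (n j : ℚ) := by exact_mod_cast hpos j
    have hne := mul_ne_zero (ne_of_gt h1) (ne_of_gt h2)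
    exact (mul_eq_zero.mp htr).resolve_right hne
  · intro i _ hij
    rw [htr_off i hij, smul_zero]
  · intro h; exact absurd (Finset.mem_univ j) h
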